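/- Failure of positive semidefinite matrix completion for non-chordal graphs: let G be a simple graph on the vertex set {1, ..., n} that is not chordal. Then there exists a real symmetric n×n matrix A such that for every clique K of G the principal submatrix of A indexed by K is positive semidefinite, yet there is no positive semidefinite real n×n matrix B with B_{ii} = A_{ii} for all i and B_{ij} = A_{ij} for every edge {i,j} of G. -/

import Mathlib

open Matrix SimpleGraph

namespace PSDCompletion

variable {V : Type*} {G : SimpleGraph V}


variable {V : Type*} {G : SimpleGraph V}

lemma support_getElem_eq_getVert {u v : V} (p : G.Walk u v) (i : ℕ)
    (h : i < p.support.length) : p.support[i] = p.getVert i := by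
  induction p generalizing i with
  | nil =>
    simp only [Walk.support_nil, List.length_singleton] at h
    interval_cases i
    simp
  | cons hadj p ih =>
    cases i with
    | zero => simp
    | succ i =>
      simp only [Walk.support_cons, List.length_cons] at h ⊢
      simp only [List.getElem_cons_succ, Walk.getVert_cons_succ]
      exact ih i (by omega)

lemma cycle_getVert_inj {v : V} {c : G.Walk v v} (hc : c.IsCycle) {i j : ℕ}
    (hi1 : 1 ≤ i) (hi2 : i ≤ c.length) (hj1 : 1 ≤ j) (hj2 : j ≤ c.length)
    (h : c.getVert i = c.getVert j) : i = j := by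
  have hnd : c.support.tail.Nodup := hc.support_nodup
  have hlt : c.support.tail.length = c.length := by
    simp [Walk.length_support, List.length_tail]
  have h1 : i - 1 < c.support.tail.length := by omega
  have h2 : j - 1 < c.support.tail.length := by omega
  have hsl : c.support.length = c.length + 1 := Walk.length_support c
  have e1 : c.support.tail[i-1]'h1 = c.getVert i := by
    rw [List.getElem_tail, support_getElem_eq_getVert]
    congr 1; omega
  have e2 : c.support.tail[j-1]'h2 = c.getVert j := by
    rw [List.getElem_tail, support_getElem_eq_getVert]
    congr 1; omega
  have := (hnd.getElem_inj_iff (hi := h1) (hj := h2)).mp (by rw [e1, e2]; exact h)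
  omega

/-- Neighbors of the base point of a cycle in its subgraph. -/
lemma cycle_adj_start {v : V} {c : G.Walk v v} (hc : c.IsCycle) {x : V}
    (h : c.toSubgraph.Adj v x) : x = c.getVert 1 ∨ x = c.getVert (c.length - 1) := by
  have h3 := hc.three_le_length
  obtain ⟨i, hi, hilt⟩ := (Walk.toSubgraph_adj_iff c).mp h
  rw [Sym2.eq_iff] at hi
  rcases hi with ⟨h1, h2⟩ | ⟨h1, h2⟩
  · rcases Nat.eq_zero_or_pos i with rfl | hpos
    · left; rw [← h2]
    · exfalso
      have : i = c.length := cycle_getVert_inj hc hpos (le_of_lt hilt) (by omega) le_rfl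
        (by rw [h1, Walk.getVert_length])
      omega
  · right
    have : i + 1 = c.length := cycle_getVert_inj hc (by omega) (by omega) (by omega) le_rfl
      (by rw [h2, Walk.getVert_length])
    rw [← h1]; congr 1; omega

/-- A cycle of length ≥ 4 contains no triangle in its subgraph. -/
lemma cycle_no_triangle [DecidableEq V] {v : V} {c : G.Walk v v} (hc : c.IsCycle)
    (hlen : 4 ≤ c.length) {a b d : V} (hbd : b ≠ d)
    (hab : c.toSubgraph.Adj a b) (had : c.toSubgraph.Adj a d)
    (hbd' : c.toSubgraph.Adj b d) : False := by
  have ha : a ∈ c.support := by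
    rw [← Walk.mem_verts_toSubgraph]; exact hab.fst_mem
  set c' := c.rotate a ha with hc'def
  have hc' : c'.IsCycle := hc.rotate ha
  have hts : c'.toSubgraph = c.toSubgraph := Walk.toSubgraph_rotate c ha
  have hL : c'.length = c.length := by
    have := (Walk.rotate_edges c a ha).perm.length_eq
    rw [← Walk.length_edges, ← Walk.length_edges]; exact this
  have hg0 : c'.getVert 0 = a := Walk.getVert_zero c'
  have hL4 : 4 ≤ c'.length := hL ▸ hlen
  have hb' : b = c'.getVert 1 ∨ b = c'.getVert (c'.length - 1) :=
    cycle_adj_start hc' (by rw [hts]; exact hab)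
  have hd' : d = c'.getVert 1 ∨ d = c'.getVert (c'.length - 1) :=
    cycle_adj_start hc' (by rw [hts]; exact had)
  have hsbd : s(b, d) = s(c'.getVert 1, c'.getVert (c'.length - 1)) := by
    rcases hb' with hb1 | hb1 <;> rcases hd' with hd1 | hd1
    · exact absurd (hb1.trans hd1.symm) hbd
    · rw [hb1, hd1]
    · rw [hb1, hd1, Sym2.eq_swap]
    · exact absurd (hb1.trans hd1.symm) hbd
  have hadj : c'.toSubgraph.Adj b d := hts ▸ hbd'
  obtain ⟨i, hi, hilt⟩ := (Walk.toSubgraph_adj_iff c').mp hadj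
  rw [hsbd, Sym2.eq_iff] at hi
  have hane : a ≠ b := hab.ne
  have hane' : a ≠ d := had.ne
  have hag1 : a ≠ c'.getVert 1 := by
    rcases hb' with h | h
    · rw [← h]; exact hane
    · rcases hd' with h2 | h2
      · rw [← h2]; exact hane'
      · exact absurd (h.trans h2.symm) hbd
  have hagL : a ≠ c'.getVert (c'.length - 1) := by
    rcases hb' with h | h
    · rcases hd' with h2 | h2
      · exact absurd (h.trans h2.symm) hbd
      · rw [← h2]; exact hane'
    · rw [← h]; exact hane
  rcases hi with ⟨h1, h2⟩ | ⟨h1, h2⟩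
  · rcases Nat.eq_zero_or_pos i with rfl | hpos
    · exact hag1 (hg0.symm.trans h1)
    · have hi1 : i = 1 := cycle_getVert_inj hc' hpos (le_of_lt hilt) (by omega) (by omega) h1
      have : i + 1 = c'.length - 1 := cycle_getVert_inj hc' (by omega) (by omega)
        (by omega) (by omega) h2
      omega
  · have hi1 : i + 1 = 1 := cycle_getVert_inj hc' (by omega) (by omega) (by omega)
      (by omega) h2
    have hi0 : i = 0 := by omega
    subst hi0
    exact hagL (hg0.symm.trans h1)

end PSDCompletion

/-- A simple graph is chordal if every cycle of length at least 4 has a chord: an edge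
of the graph joining two vertices of the cycle that is not an edge of the cycle. -/
def SimpleGraph.IsChordalGraph {V : Type*} (G : SimpleGraph V) : Prop :=
  ∀ ⦃v : V⦄ (c : G.Walk v v), c.IsCycle → 4 ≤ c.length →
    ∃ x ∈ c.support, ∃ y ∈ c.support, G.Adj x y ∧ s(x, y) ∉ c.edges

/-- Failure of PSD completion for non-chordal graphs (Grone–Johnson–Sá–Wolkowicz,
'only if' direction): if `G` is not chordal, there is a partial symmetric matrix `A`
all of whose fully specified principal submatrices (indexed by cliques of `G`) are PSD,
but which admits no PSD completion. -/
theorem exists_noncompletable_of_not_chordal {n : ℕ} (G : SimpleGraph (Fin n))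
    (hnot : ¬ G.IsChordalGraph) :
    ∃ A : Matrix (Fin n) (Fin n) ℝ, A.IsSymm ∧
      (∀ K : Finset (Fin n), G.IsClique (K : Set (Fin n)) →
        (A.submatrix (fun i : K => (i : Fin n)) (fun j : K => (j : Fin n))).PosSemidef) ∧
      ¬ ∃ B : Matrix (Fin n) (Fin n) ℝ, B.PosSemidef ∧
        (∀ i, B i i = A i i) ∧ (∀ i j, G.Adj i j → B i j = A i j) := by
  classical
  rw [SimpleGraph.IsChordalGraph] at hnot
  push_neg at hnot
  obtain ⟨v, c, hcyc, hlen, hchord⟩ := hnot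
  -- Notation
  have hk4 : 4 ≤ c.length := hlen
  have hedge_iff : ∀ x y : Fin n, s(x, y) ∈ c.edges ↔ c.toSubgraph.Adj x y := by
    intro x y
    rw [← Walk.mem_edges_toSubgraph, SimpleGraph.Subgraph.mem_edgeSet]
  have hchord' : ∀ x y : Fin n, x ∈ c.support → y ∈ c.support → G.Adj x y →
      c.toSubgraph.Adj x y := fun x y hx hy hxy =>
    (hedge_iff x y).mp (hchord x hx y hy hxy)
  set g : ℕ → Fin n := c.getVert with hg
  set e₀ : Sym2 (Fin n) := s(g 0, g 1) with he₀
  set A : Matrix (Fin n) (Fin n) ℝ := Matrix.of fun i j =>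
    if i = j then 1 else if s(i, j) = e₀ then -1 else
      if s(i, j) ∈ c.edges then 1 else 0 with hA
  have he₀mem : e₀ ∈ c.edges :=
    (hedge_iff (g 0) (g 1)).mpr (Walk.toSubgraph_adj_getVert c (by omega))
  have hAdiag : ∀ i, A i i = 1 := by intro i; simp [hA]
  have hAsymm : A.IsSymm := by
    rw [Matrix.IsSymm]
    ext i j
    by_cases hij : i = j
    · subst hij; rfl
    · simp only [Matrix.transpose_apply, hA, Matrix.of_apply]
      rw [if_neg (Ne.symm hij), if_neg hij, show s(j, i) = s(i, j) from Sym2.eq_swap]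
  have hA01 : A (g 0) (g 1) = -1 := by
    have hne : g 0 ≠ g 1 := (c.adj_getVert_succ (by omega : 0 < c.length)).ne
    simp [hA, hne, he₀]
  have hAedge : ∀ i : ℕ, 1 ≤ i → i < c.length → A (g i) (g (i + 1)) = 1 := by
    intro i h1 h2
    have hne : g i ≠ g (i + 1) := (c.adj_getVert_succ h2).ne
    have hnote : s(g i, g (i + 1)) ≠ e₀ := by
      rw [he₀]
      intro hcontra
      rw [Sym2.eq_iff] at hcontra
      rcases hcontra with ⟨ha, hb⟩ | ⟨ha, hb⟩
      · have : g i = g c.length := by rw [ha, hg]; rw [Walk.getVert_zero, Walk.getVert_length]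
        have := PSDCompletion.cycle_getVert_inj hcyc h1 (by omega) (by omega) le_rfl this
        omega
      · have : g (i + 1) = g c.length := by rw [hb, hg]; rw [Walk.getVert_zero, Walk.getVert_length]
        have h3 := PSDCompletion.cycle_getVert_inj hcyc (by omega : 1 ≤ i + 1) (by omega)
          (by omega) le_rfl this
        have h4 := PSDCompletion.cycle_getVert_inj hcyc h1 (by omega) (by omega : 1 ≤ 1)
          (by omega) ha
        omega
    have hmem : s(g i, g (i + 1)) ∈ c.edges :=
      (hedge_iff _ _).mpr (Walk.toSubgraph_adj_getVert c h2)
    simp [hA, hne, hnote, hmem]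
  refine ⟨A, hAsymm, ?_, ?_⟩
  · -- every clique submatrix is PSD
    intro K hK
    by_cases hex : ∃ a ∈ K, ∃ b ∈ K, a ≠ b ∧ s(a, b) ∈ c.edges
    · obtain ⟨a, haK, b, hbK, hne_ab, hab_mem⟩ := hex
      have hab_adj : c.toSubgraph.Adj a b := (hedge_iff a b).mp hab_mem
      have hsupp : ∀ z w : Fin n, c.toSubgraph.Adj z w → z ∈ c.support := fun z w h =>
        (Walk.mem_verts_toSubgraph c).mp h.fst_mem
      have huniq : ∀ x y : Fin n, x ∈ K → y ∈ K → x ≠ y → s(x, y) ∈ c.edges →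
          s(x, y) = s(a, b) := by
        intro x y hxK hyK hxy hmem
        have hxy_adj : c.toSubgraph.Adj x y := (hedge_iff x y).mp hmem
        have hx : x = a ∨ x = b := by
          by_contra hcon
          push_neg at hcon
          have hGxa : G.Adj x a := hK (by simpa using hxK) (by simpa using haK) hcon.1
          have hGxb : G.Adj x b := hK (by simpa using hxK) (by simpa using hbK) hcon.2
          have hta : c.toSubgraph.Adj x a :=
            hchord' x a (hsupp x y hxy_adj) (hsupp a b hab_adj) hGxa
          have htb : c.toSubgraph.Adj x b :=
            hchord' x b (hsupp x y hxy_adj) (hsupp b a hab_adj.symm) hGxb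
          exact PSDCompletion.cycle_no_triangle hcyc hlen hne_ab hta htb hab_adj
        have hy : y = a ∨ y = b := by
          by_contra hcon
          push_neg at hcon
          have hGya : G.Adj y a := hK (by simpa using hyK) (by simpa using haK) hcon.1
          have hGyb : G.Adj y b := hK (by simpa using hyK) (by simpa using hbK) hcon.2
          have hta : c.toSubgraph.Adj y a :=
            hchord' y a (hsupp y x hxy_adj.symm) (hsupp a b hab_adj) hGya
          have htb : c.toSubgraph.Adj y b :=
            hchord' y b (hsupp y x hxy_adj.symm) (hsupp b a hab_adj.symm) hGyb
          exact PSDCompletion.cycle_no_triangle hcyc hlen hne_ab hta htb hab_adj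
        rcases hx with rfl | rfl <;> rcases hy with rfl | rfl
        · exact absurd rfl hxy
        · rfl
        · exact Sym2.eq_swap
        · exact absurd rfl hxy
      set ε : ℝ := A a b with hεdef
      have hεval : ε = 1 ∨ ε = -1 := by
        rw [hεdef, hA]
        simp only [Matrix.of_apply, if_neg hne_ab, if_pos hab_mem]
        split_ifs
        · right; rfl
        · left; rfl
      have hε2 : ε * ε = 1 := by rcases hεval with h | h <;> rw [h] <;> norm_num
      set a' : {x // x ∈ K} := ⟨a, haK⟩ with ha'
      set b' : {x // x ∈ K} := ⟨b, hbK⟩ with hb'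
      have hab' : a' ≠ b' := fun h => hne_ab (congrArg Subtype.val h)
      set gm : {x // x ∈ K} → {x // x ∈ K} := fun j => if j = b' then a' else j with hgm
      set w : {x // x ∈ K} → ℝ := fun j => if j = b' then ε else 1 with hw
      set C : Matrix {x // x ∈ K} {x // x ∈ K} ℝ :=
        Matrix.of fun x j => if x = gm j then w j else 0 with hC
      have hgma : gm a' = a' := by
        rw [hgm]
        by_cases h : a' = b' <;> simp [h]
      have hgmb : gm b' = a' := by rw [hgm]; simp
      have hwa : w a' = 1 := by rw [hw]; simp [hab']
      have hwb : w b' = ε := by rw [hw]; simp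
      have key : A.submatrix (fun i : K => (i : Fin n)) (fun j : K => (j : Fin n)) = Matrix.conjTranspose C * C := by
        ext i j
        rw [Matrix.mul_apply]
        have hsummand : ∀ x : {x // x ∈ K},
            Matrix.conjTranspose C i x * C x j = if x = gm i then (if gm i = gm j then w i * w j else 0) else 0 := by
          intro x
          rw [Matrix.conjTranspose_apply, hC]
          simp only [Matrix.of_apply, star_trivial]
          by_cases hxi : x = gm i
          · rw [if_pos hxi, if_pos hxi]
            by_cases hij' : gm i = gm j
            · rw [if_pos (hxi.trans hij'), if_pos hij']
            · rw [if_neg (fun h => hij' ((hxi.symm.trans h))), if_neg hij', mul_zero]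
          · rw [if_neg hxi, if_neg hxi, zero_mul]
        rw [Finset.sum_congr rfl fun x _ => hsummand x, Finset.sum_ite_eq',
          if_pos (Finset.mem_univ _), Matrix.submatrix_apply]
        by_cases hij : i = j
        · subst hij
          rw [if_pos rfl, hAdiag]
          by_cases hib : i = b'
          · rw [hib, hwb, hε2]
          · have : w i = 1 := by rw [hw]; simp [hib]
            rw [this, one_mul]
        · have hcne : (i : Fin n) ≠ (j : Fin n) := fun h => hij (Subtype.ext h)
          by_cases hgij : gm i = gm j
          · rw [if_pos hgij]
            have hpair : (i = b' ∧ j = a') ∨ (i = a' ∧ j = b') := by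
              by_cases hib : i = b'
              · by_cases hjb : j = b'
                · exact absurd (hib.trans hjb.symm) hij
                · left
                  refine ⟨hib, ?_⟩
                  have hgj : gm j = j := by rw [hgm]; simp [hjb]
                  rw [← hgj, ← hgij, hib, hgmb]
              · by_cases hjb : j = b'
                · right
                  refine ⟨?_, hjb⟩
                  have hgi : gm i = i := by rw [hgm]; simp [hib]
                  rw [← hgi, hgij, hjb, hgmb]
                · exfalso
                  apply hij
                  have hgi : gm i = i := by rw [hgm]; simp [hib]
                  have hgj : gm j = j := by rw [hgm]; simp [hjb]
                  rw [← hgi, ← hgj, hgij]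
            have hba : A b a = A a b := by
              have := congrFun (congrFun hAsymm a) b
              simpa using this
            rcases hpair with ⟨hib, hja⟩ | ⟨hia, hjb⟩
            · subst hib; subst hja
              show A b a = w b' * w a'
              rw [hba, hwb, hwa, mul_one, hεdef]
            · subst hia; subst hjb
              show A a b = w a' * w b'
              rw [hwa, hwb, one_mul, hεdef]
          · rw [if_neg hgij]
            have hnm : s((i : Fin n), (j : Fin n)) ∉ c.edges := by
              intro hmem
              have hu := huniq _ _ i.2 j.2 hcne hmem
              rw [Sym2.eq_iff] at hu
              apply hgij
              rcases hu with ⟨h1, h2⟩ | ⟨h1, h2⟩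
              · have hia : i = a' := Subtype.ext h1
                have hjb : j = b' := Subtype.ext h2
                rw [hia, hjb, hgma, hgmb]
              · have hib : i = b' := Subtype.ext h1
                have hja : j = a' := Subtype.ext h2
                rw [hib, hja, hgma, hgmb]
            have hne₀ : s((i : Fin n), (j : Fin n)) ≠ e₀ := fun h => hnm (h ▸ he₀mem)
            rw [hA]
            simp only [Matrix.of_apply, if_neg hcne, if_neg hne₀, if_neg hnm]
      rw [key]
      exact Matrix.posSemidef_conjTranspose_mul_self C
    · push_neg at hex
      have : A.submatrix (fun i : K => (i : Fin n)) (fun j : K => (j : Fin n)) = 1 := by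
        ext i j
        by_cases hij : i = j
        · subst hij
          simp [Matrix.submatrix_apply, hAdiag, Matrix.one_apply]
        · have hne : (i : Fin n) ≠ (j : Fin n) := fun h => hij (Subtype.ext h)
          have h1 : s((i : Fin n), (j : Fin n)) ∉ c.edges := hex i i.2 j j.2 hne
          have h2 : s((i : Fin n), (j : Fin n)) ≠ e₀ := fun h => h1 (h ▸ he₀mem)
          simp [Matrix.submatrix_apply, hA, hne, h1, h2, Matrix.one_apply, hij]
      rw [this]
      exact Matrix.PosSemidef.one
  · -- no PSD completion
    rintro ⟨B, hB, hdiag, hedge⟩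
    have hBsym : ∀ x y, B x y = B y x := by
      intro x y
      have h := hB.isHermitian
      rw [Matrix.IsHermitian] at h
      have := congrFun (congrFun h y) x
      simpa [Matrix.conjTranspose_apply] using this
    have hBedge : ∀ i : ℕ, i < c.length → B (g i) (g (i + 1)) = A (g i) (g (i + 1)) :=
      fun i h2 => hedge _ _ (c.adj_getVert_succ h2)
    have step : ∀ i : ℕ, 1 ≤ i → i < c.length → ∀ y, B y (g i) = B y (g (i + 1)) := by
      intro i h1 h2 y
      set x : Fin n → ℝ := Pi.single (g i) 1 - Pi.single (g (i + 1)) 1 with hx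
      have hne : g i ≠ g (i + 1) := (c.adj_getVert_succ h2).ne
      have hmv : B *ᵥ x = fun p => B p (g i) - B p (g (i + 1)) := by
        rw [hx, Matrix.mulVec_sub]
        funext p
        simp [Matrix.mulVec_single]
      have hq : star x ⬝ᵥ B *ᵥ x = 0 := by
        have hstar : star x = x := by
          funext t
          simp [hx]
        rw [hstar, hmv, hx, sub_dotProduct, single_dotProduct,
          single_dotProduct]
        have e1 : B (g i) (g i) = 1 := by rw [hdiag, hAdiag]
        have e2 : B (g (i + 1)) (g (i + 1)) = 1 := by rw [hdiag, hAdiag]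
        have e3 : B (g i) (g (i + 1)) = 1 := by rw [hBedge i h2, hAedge i h1 h2]
        have e4 : B (g (i + 1)) (g i) = 1 := by rw [hBsym, e3]
        simp only [e1, e2, e3, e4]
        ring
      have hz := (hB.dotProduct_mulVec_zero_iff x).mp hq
      have := congrFun hz y
      rw [hmv] at this
      simpa [sub_eq_zero] using this
    have chain : ∀ i : ℕ, 1 ≤ i → i ≤ c.length → ∀ y, B y (g 1) = B y (g i) := by
      intro i
      induction i with
      | zero => omega
      | succ m ih =>
        intro h1 h2 y
        rcases Nat.eq_zero_or_pos m with rfl | hm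
        · rfl
        · rw [ih hm (by omega) y]
          exact step m hm (by omega) y
    have hgk : g c.length = g 0 := by rw [hg, Walk.getVert_length, Walk.getVert_zero]
    have h1 : B (g 1) (g 1) = 1 := by rw [hdiag, hAdiag]
    have h2 : B (g 1) (g 0) = -1 := by
      have hadj : G.Adj (g 0) (g 1) := c.adj_getVert_succ (by omega : 0 < c.length)
      rw [hedge _ _ hadj.symm]
      have hne : g 1 ≠ g 0 := hadj.ne'
      rw [hA]
      simp only [Matrix.of_apply, if_neg hne]
      rw [show s(g 1, g 0) = s(g 0, g 1) from Sym2.eq_swap, if_pos rfl]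
    have := chain c.length (by omega) le_rfl (g 1)
    rw [hgk, h2] at this
    rw [h1] at this
    norm_num at this
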